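/- arXiv:2102.01663 — 8 statements merged into one kernel-verified Lean document; each statement's English description precedes it below -/
import Mathlib

section
/- Let q ≥ 2 be an even integer, ζ = exp(2πi/(q+1)), and c_1, c_2, c_3 integers with 1 ≤ c_i ≤ q/2. Define S = (q-1)²/(q(q+1)) - 1/q - (1/(q+1)) Σ_{k=1}^{q/2} (ζ^{k c_1} + ζ^{-k c_1})(ζ^{k c_2} + ζ^{-k c_2})(ζ^{k c_3} + ζ^{-k c_3}). Then S = 0 if c_1 + c_2 + c_3 = q+1 or c_1 + c_2 + c_3 = 2·max(c_1,c_2,c_3), and S = 1 otherwise. -/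
open Finset

lemma geom_zeta (n : ℕ) (hn : 0 < n) (ζ : ℂ) (hζ : IsPrimitiveRoot ζ n) (m : ℤ) :
    ∑ k ∈ range n, ζ ^ ((k : ℤ) * m) = if (n:ℤ) ∣ m then (n:ℂ) else 0 := by
  have hmain : ∀ k : ℕ, ζ ^ ((k:ℤ) * m) = (ζ ^ m) ^ k := by
    intro k
    rw [mul_comm, zpow_mul, zpow_natCast]
  simp_rw [hmain]
  by_cases h : (n:ℤ) ∣ m
  · rw [if_pos h]
    have : ζ ^ m = 1 := (hζ.zpow_eq_one_iff_dvd m).mpr h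
    simp [this]
  · rw [if_neg h]
    have hw : ζ ^ m ≠ 1 := fun h1 => h ((hζ.zpow_eq_one_iff_dvd m).mp h1)
    rw [geom_sum_eq hw]
    have : (ζ ^ m) ^ n = 1 := by
      rw [← zpow_natCast, ← zpow_mul, mul_comm, zpow_mul, zpow_natCast, hζ.pow_eq_one, one_zpow]
    simp [this]

lemma pair_sum (q : ℕ) (hq : 2 ≤ q) (hqe : Even q) (ζ : ℂ)
    (hζ : IsPrimitiveRoot ζ (q+1)) (m : ℤ) :
    ∑ k ∈ Icc 1 (q/2), (ζ ^ ((k:ℤ)*m) + ζ ^ (-((k:ℤ)*m)))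
      = (if ((q:ℤ)+1) ∣ m then (q:ℂ)+1 else 0) - 1 := by
  have hne : ζ ≠ 0 := hζ.ne_zero (Nat.succ_ne_zero q)
  have h1 : ζ ^ ((q:ℤ)+1) = 1 := by
    have := hζ.pow_eq_one
    rw [← zpow_natCast] at this
    simpa using this
  obtain ⟨t, ht⟩ := hqe
  rw [sum_add_distrib]
  have h2 : ∑ k ∈ Icc 1 (q/2), ζ ^ (-((k:ℤ)*m)) = ∑ k ∈ Icc (q/2+1) q, ζ ^ ((k:ℤ)*m) := by
    apply sum_nbij' (i := fun k => q + 1 - k) (j := fun k => q + 1 - k)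
    · intro a ha; simp only [mem_Icc] at *; omega
    · intro a ha; simp only [mem_Icc] at *; omega
    · intro a ha; simp only [mem_Icc] at ha; omega
    · intro a ha; simp only [mem_Icc] at ha; omega
    · intro a ha
      simp only [mem_Icc] at ha
      have hcast : ((q + 1 - a : ℕ) : ℤ) = (q:ℤ) + 1 - a := by omega
      rw [hcast]
      have he : ((q:ℤ) + 1 - a) * m = ((q:ℤ)+1) * m + (-((a:ℤ)*m)) := by ring
      rw [he, zpow_add₀ hne, zpow_mul, h1, one_zpow, one_mul]
  rw [h2]
  have h3 : ∑ k ∈ Icc 1 (q/2), ζ ^ ((k:ℤ)*m) + ∑ k ∈ Icc (q/2+1) q, ζ ^ ((k:ℤ)*m)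
      = ∑ k ∈ Icc 1 q, ζ ^ ((k:ℤ)*m) := by
    rw [← Finset.Ico_add_one_right_eq_Icc, ← Finset.Ico_add_one_right_eq_Icc, ← Finset.Ico_add_one_right_eq_Icc]
    exact Finset.sum_Ico_consecutive _ (by omega) (by omega)
  rw [h3]
  have h4 : range (q+1) = insert 0 (Icc 1 q) := by
    ext x; simp only [mem_range, mem_insert, mem_Icc]; omega
  have h5 := geom_zeta (q+1) (by omega) ζ hζ m
  rw [h4, sum_insert (by simp)] at h5
  push_cast at h5 ⊢
  simp only [zero_mul, zpow_zero] at h5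
  linear_combination h5

lemma expand3 (ζ : ℂ) (hζ : ζ ≠ 0) (a b c : ℤ) :
    (ζ^a + ζ^(-a)) * (ζ^b + ζ^(-b)) * (ζ^c + ζ^(-c)) =
      (ζ^(a+b+c) + ζ^(-(a+b+c))) + (ζ^(a+b-c) + ζ^(-(a+b-c)))
        + (ζ^(a-b+c) + ζ^(-(a-b+c))) + (ζ^(a-b-c) + ζ^(-(a-b-c))) := by
  simp only [zpow_add₀ hζ, zpow_sub₀ hζ, zpow_neg]
  field_simp
  ring

theorem stmt_4 (q : ℕ) (hq : 2 ≤ q) (hqe : Even q) (c : Fin 3 → ℕ)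
    (hc : ∀ i, 1 ≤ c i ∧ c i ≤ q / 2) :
    ((q : ℂ) - 1) ^ 2 / ((q : ℂ) * ((q : ℂ) + 1)) - 1 / (q : ℂ)
        - (1 / ((q : ℂ) + 1)) * ∑ k ∈ Finset.Icc 1 (q / 2),
            ∏ i : Fin 3,
              (Complex.exp (2 * Real.pi * Complex.I / (q + 1)) ^ ((k : ℤ) * (c i : ℤ)) +
               Complex.exp (2 * Real.pi * Complex.I / (q + 1)) ^ (-((k : ℤ) * (c i : ℤ)))) =
      if c 0 + c 1 + c 2 = q + 1 ∨ c 0 + c 1 + c 2 = 2 * max (max (c 0) (c 1)) (c 2)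
      then 0 else 1 := by
  set ζ : ℂ := Complex.exp (2 * Real.pi * Complex.I / (q + 1)) with hζdef
  have hζ : IsPrimitiveRoot ζ (q+1) := by
    have := Complex.isPrimitiveRoot_exp (q+1) (by omega)
    rw [hζdef]
    convert this using 3
    push_cast
    ring
  have hne : ζ ≠ 0 := hζ.ne_zero (Nat.succ_ne_zero q)
  obtain ⟨t, ht⟩ := hqe
  have hc0 := hc 0
  have hc1 := hc 1
  have hc2 := hc 2
  -- the four exponent combinations
  set m1 : ℤ := (c 0 : ℤ) + (c 1 : ℤ) + (c 2 : ℤ) with hm1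
  set m2 : ℤ := (c 0 : ℤ) + (c 1 : ℤ) - (c 2 : ℤ) with hm2
  set m3 : ℤ := (c 0 : ℤ) - (c 1 : ℤ) + (c 2 : ℤ) with hm3
  set m4 : ℤ := (c 0 : ℤ) - (c 1 : ℤ) - (c 2 : ℤ) with hm4
  have key : ∀ k ∈ Icc 1 (q/2),
      ∏ i : Fin 3, (ζ ^ ((k : ℤ) * (c i : ℤ)) + ζ ^ (-((k : ℤ) * (c i : ℤ))))
        = (ζ ^ ((k:ℤ)*m1) + ζ ^ (-((k:ℤ)*m1))) + (ζ ^ ((k:ℤ)*m2) + ζ ^ (-((k:ℤ)*m2)))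
          + (ζ ^ ((k:ℤ)*m3) + ζ ^ (-((k:ℤ)*m3))) + (ζ ^ ((k:ℤ)*m4) + ζ ^ (-((k:ℤ)*m4))) := by
    intro k _
    rw [Fin.prod_univ_three]
    have := expand3 ζ hne ((k:ℤ)*(c 0:ℤ)) ((k:ℤ)*(c 1:ℤ)) ((k:ℤ)*(c 2:ℤ))
    have e1 : (k:ℤ)*(c 0:ℤ) + (k:ℤ)*(c 1:ℤ) + (k:ℤ)*(c 2:ℤ) = (k:ℤ)*m1 := by rw [hm1]; ring
    have e2 : (k:ℤ)*(c 0:ℤ) + (k:ℤ)*(c 1:ℤ) - (k:ℤ)*(c 2:ℤ) = (k:ℤ)*m2 := by rw [hm2]; ring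
    have e3 : (k:ℤ)*(c 0:ℤ) - (k:ℤ)*(c 1:ℤ) + (k:ℤ)*(c 2:ℤ) = (k:ℤ)*m3 := by rw [hm3]; ring
    have e4 : (k:ℤ)*(c 0:ℤ) - (k:ℤ)*(c 1:ℤ) - (k:ℤ)*(c 2:ℤ) = (k:ℤ)*m4 := by rw [hm4]; ring
    rw [e1, e2, e3, e4] at this
    exact this
  rw [Finset.sum_congr rfl key]
  simp only [Finset.sum_add_distrib]
  have P : ∀ m : ℤ, (∑ k ∈ Icc 1 (q/2), ζ ^ ((k:ℤ)*m)) + (∑ k ∈ Icc 1 (q/2), ζ ^ (-((k:ℤ)*m)))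
      = (if ((q:ℤ)+1) ∣ m then (q:ℂ)+1 else 0) - 1 := by
    intro m
    rw [← sum_add_distrib]
    exact pair_sum q hq ⟨t, ht⟩ ζ hζ m
  rw [P m1, P m2, P m3, P m4]
  -- divisibility conditions
  have habs : ∀ m : ℤ, ((q:ℤ)+1) ∣ m → -((q:ℤ)+1) < m → m < (q:ℤ)+1 → m = 0 := by
    intro m hd hl hu
    exact Int.eq_zero_of_abs_lt_dvd hd (abs_lt.mpr ⟨hl, hu⟩)
  have d1 : ((q:ℤ)+1) ∣ m1 ↔ c 0 + c 1 + c 2 = q + 1 := by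
    constructor
    · intro hd
      have h0 : m1 - ((q:ℤ)+1) = 0 := by
        refine habs _ (dvd_sub hd dvd_rfl) ?_ ?_ <;> (rw [hm1]; omega)
      rw [hm1] at h0; omega
    · intro h
      have : m1 = ((q:ℤ)+1) * 1 := by rw [hm1]; omega
      exact ⟨1, this⟩
  have d2 : ((q:ℤ)+1) ∣ m2 ↔ c 2 = c 0 + c 1 := by
    constructor
    · intro hd
      have h0 : m2 = 0 := by refine habs _ hd ?_ ?_ <;> (rw [hm2]; omega)
      rw [hm2] at h0; omega
    · intro h
      have : m2 = 0 := by rw [hm2]; omega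
      rw [this]; exact dvd_zero _
  have d3 : ((q:ℤ)+1) ∣ m3 ↔ c 1 = c 0 + c 2 := by
    constructor
    · intro hd
      have h0 : m3 = 0 := by refine habs _ hd ?_ ?_ <;> (rw [hm3]; omega)
      rw [hm3] at h0; omega
    · intro h
      have : m3 = 0 := by rw [hm3]; omega
      rw [this]; exact dvd_zero _
  have d4 : ((q:ℤ)+1) ∣ m4 ↔ c 0 = c 1 + c 2 := by
    constructor
    · intro hd
      have h0 : m4 = 0 := by refine habs _ hd ?_ ?_ <;> (rw [hm4]; omega)
      rw [hm4] at h0; omega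
    · intro h
      have : m4 = 0 := by rw [hm4]; omega
      rw [this]; exact dvd_zero _
  rw [if_congr d1 rfl rfl, if_congr d2 rfl rfl, if_congr d3 rfl rfl, if_congr d4 rfl rfl]
  have hq0 : (q:ℂ) ≠ 0 := Nat.cast_ne_zero.mpr (by omega)
  have hq1 : (q:ℂ) + 1 ≠ 0 := by
    have : ((q+1:ℕ):ℂ) ≠ 0 := Nat.cast_ne_zero.mpr (by omega)
    push_cast at this; exact this
  have hM0 : c 0 ≤ max (max (c 0) (c 1)) (c 2) := le_trans (le_max_left _ _) (le_max_left _ _)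
  have hM1 : c 1 ≤ max (max (c 0) (c 1)) (c 2) := le_trans (le_max_right _ _) (le_max_left _ _)
  have hM2 : c 2 ≤ max (max (c 0) (c 1)) (c 2) := le_max_right _ _
  have hM3 : max (max (c 0) (c 1)) (c 2) = c 0 ∨ max (max (c 0) (c 1)) (c 2) = c 1
      ∨ max (max (c 0) (c 1)) (c 2) = c 2 := by
    rcases max_choice (max (c 0) (c 1)) (c 2) with h | h
    · rcases max_choice (c 0) (c 1) with h' | h'
      · left; rw [h, h']
      · right; left; rw [h, h']
    · right; right; exact h
  generalize hMg : max (max (c 0) (c 1)) (c 2) = M at hM0 hM1 hM2 hM3 ⊢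
  have hE : (if c 0 + c 1 + c 2 = q + 1 then ((q:ℂ)+1) else 0)
      + (if c 2 = c 0 + c 1 then ((q:ℂ)+1) else 0)
      + (if c 1 = c 0 + c 2 then ((q:ℂ)+1) else 0)
      + (if c 0 = c 1 + c 2 then ((q:ℂ)+1) else 0)
      = if (c 0 + c 1 + c 2 = q + 1 ∨ c 0 + c 1 + c 2 = 2 * M)
        then ((q:ℂ)+1) else 0 := by
    split_ifs <;> first | (exfalso; omega) | ring | norm_num
  have hgoal : ((if c 0 + c 1 + c 2 = q + 1 then ((q:ℂ)+1) else 0) - 1)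
      + ((if c 2 = c 0 + c 1 then ((q:ℂ)+1) else 0) - 1)
      + ((if c 1 = c 0 + c 2 then ((q:ℂ)+1) else 0) - 1)
      + ((if c 0 = c 1 + c 2 then ((q:ℂ)+1) else 0) - 1)
      = (if (c 0 + c 1 + c 2 = q + 1 ∨ c 0 + c 1 + c 2 = 2 * M)
        then ((q:ℂ)+1) else 0) - 4 := by linear_combination hE
  rw [hgoal]
  by_cases hCc : (c 0 + c 1 + c 2 = q + 1 ∨ c 0 + c 1 + c 2 = 2 * M)
  · rw [if_pos hCc, if_pos hCc]
    field_simp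
    ring
  · rw [if_neg hCc, if_neg hCc]
    field_simp
    ring
end

section
/- Let q ≥ 2 be an even integer, ζ = exp(2πi/(q-1)), and c_1, c_2, c_3 integers with 1 ≤ c_i ≤ (q-2)/2. Define S = (q+1)²/(q(q-1)) + 1/q + (1/(q-1)) Σ_{k=1}^{(q-2)/2} (ζ^{k c_1} + ζ^{-k c_1})(ζ^{k c_2} + ζ^{-k c_2})(ζ^{k c_3} + ζ^{-k c_3}). Then S = 2 if c_1 + c_2 + c_3 = q-1 or c_1 + c_2 + c_3 = 2·max(c_1,c_2,c_3), and S = 1 otherwise. -/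
open Finset

lemma aux_dvd_iff_zero {n : ℕ} (s : ℤ) (h : s.natAbs < n) : (n:ℤ) ∣ s ↔ s = 0 := by
  constructor
  · intro hd
    exact Int.eq_zero_of_dvd_of_natAbs_lt_natAbs hd (by simpa using h)
  · rintro rfl; exact dvd_zero _

lemma aux_dvd_iff_n {n : ℕ} (s : ℤ) (h0 : 0 < s) (h2 : s < 2*n) : (n:ℤ) ∣ s ↔ s = n := by
  constructor
  · intro hd
    have hd' : (n:ℤ) ∣ (s - n) := by
      exact dvd_sub hd dvd_rfl
    have : s - n = 0 := by
      apply Int.eq_zero_of_dvd_of_natAbs_lt_natAbs hd'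
      simp only [Int.natAbs_natCast]
      omega
    omega
  · rintro rfl; exact dvd_rfl

lemma aux_geom {n : ℕ} (hn : 0 < n) {ζ : ℂ} (hζ : IsPrimitiveRoot ζ n) (s : ℤ) :
    ∑ k ∈ Finset.range n, ζ ^ ((k:ℤ) * s) = if (n:ℤ) ∣ s then (n:ℂ) else 0 := by
  have h1 : ∀ k : ℕ, ζ ^ ((k:ℤ) * s) = (ζ ^ s) ^ k := by
    intro k; rw [mul_comm, zpow_mul, zpow_natCast]
  simp_rw [h1]
  by_cases hd : (n:ℤ) ∣ s
  · rw [if_pos hd, (hζ.zpow_eq_one_iff_dvd s).mpr hd]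
    simp
  · rw [if_neg hd]
    have hne : ζ ^ s ≠ 1 := fun h => hd ((hζ.zpow_eq_one_iff_dvd s).mp h)
    have hpow : (ζ ^ s) ^ n = 1 := by
      rw [← zpow_natCast, ← zpow_mul, mul_comm, zpow_mul, zpow_natCast, hζ.pow_eq_one, one_zpow]
    rw [geom_sum_eq hne, hpow, sub_self, zero_div]

set_option maxHeartbeats 2000000 in
theorem stmt_5 (q : ℕ) (hq : 2 ≤ q) (hqe : Even q) (c : Fin 3 → ℕ)
    (hc : ∀ i, 1 ≤ c i ∧ c i ≤ (q - 2) / 2) :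
    ((q : ℂ) + 1) ^ 2 / ((q : ℂ) * ((q : ℂ) - 1)) + 1 / (q : ℂ)
        + (1 / ((q : ℂ) - 1)) * ∑ k ∈ Finset.Icc 1 ((q - 2) / 2),
            ∏ i : Fin 3,
              (Complex.exp (2 * Real.pi * Complex.I / (q - 1)) ^ ((k : ℤ) * (c i : ℤ)) +
               Complex.exp (2 * Real.pi * Complex.I / (q - 1)) ^ (-((k : ℤ) * (c i : ℤ)))) =
      if c 0 + c 1 + c 2 = q - 1 ∨ c 0 + c 1 + c 2 = 2 * max (max (c 0) (c 1)) (c 2)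
      then 2 else 1 := by
  obtain ⟨r, hr⟩ := hqe
  have hc0 := hc 0
  have hc1 := hc 1
  have hc2 := hc 2
  have hq4 : 4 ≤ q := by omega
  set m := (q - 2) / 2 with hm
  have hm1 : 1 ≤ m := by omega
  have hqm : q = 2 * m + 2 := by omega
  set n := q - 1 with hn
  have hnm : n = 2 * m + 1 := by omega
  have hn0 : 0 < n := by omega
  -- identify ζ
  have hcast : ((q:ℂ) - 1) = (n:ℂ) := by
    have : (q:ℂ) = ((n + 1 : ℕ) : ℂ) := by norm_cast; omega
    rw [this]; push_cast; ring
  rw [hcast]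
  set ζ := Complex.exp (2 * Real.pi * Complex.I / (n:ℂ)) with hζdef
  have hζ : IsPrimitiveRoot ζ n := Complex.isPrimitiveRoot_exp n hn0.ne'
  have hz : ζ ≠ 0 := Complex.exp_ne_zero _
  set f : ℕ → ℂ := fun k => ∏ i : Fin 3,
      (ζ ^ ((k : ℤ) * (c i : ℤ)) + ζ ^ (-((k : ℤ) * (c i : ℤ)))) with hf
  set e1 : ℤ := (c 0 : ℤ) + (c 1 : ℤ) + (c 2 : ℤ) with he1
  set e2 : ℤ := (c 0 : ℤ) + (c 1 : ℤ) - (c 2 : ℤ) with he2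
  set e3 : ℤ := (c 0 : ℤ) - (c 1 : ℤ) + (c 2 : ℤ) with he3
  set e4 : ℤ := (c 0 : ℤ) - (c 1 : ℤ) - (c 2 : ℤ) with he4
  have hexp : ∀ k : ℕ, f k =
      ζ ^ ((k:ℤ) * e1) + ζ ^ ((k:ℤ) * (-e1)) + ζ ^ ((k:ℤ) * e2) + ζ ^ ((k:ℤ) * (-e2))
      + ζ ^ ((k:ℤ) * e3) + ζ ^ ((k:ℤ) * (-e3)) + ζ ^ ((k:ℤ) * e4) + ζ ^ ((k:ℤ) * (-e4)) := by
    intro k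
    have key : ∀ x y z : ℤ, ζ ^ ((k:ℤ) * (x + y + z))
        = ζ ^ ((k:ℤ) * x) * ζ ^ ((k:ℤ) * y) * ζ ^ ((k:ℤ) * z) := by
      intro x y z
      rw [mul_add, mul_add, zpow_add₀ hz, zpow_add₀ hz]
    rw [hf]
    simp only [Fin.prod_univ_three]
    rw [show (k:ℤ) * e1 = (k:ℤ) * ((c 0:ℤ) + (c 1:ℤ) + (c 2:ℤ)) by rw [he1],
        show (k:ℤ) * (-e1) = (k:ℤ) * ((-(c 0:ℤ)) + (-(c 1:ℤ)) + (-(c 2:ℤ))) by rw [he1]; ring,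
        show (k:ℤ) * e2 = (k:ℤ) * ((c 0:ℤ) + (c 1:ℤ) + (-(c 2:ℤ))) by rw [he2]; ring,
        show (k:ℤ) * (-e2) = (k:ℤ) * ((-(c 0:ℤ)) + (-(c 1:ℤ)) + (c 2:ℤ)) by rw [he2]; ring,
        show (k:ℤ) * e3 = (k:ℤ) * ((c 0:ℤ) + (-(c 1:ℤ)) + (c 2:ℤ)) by rw [he3]; ring,
        show (k:ℤ) * (-e3) = (k:ℤ) * ((-(c 0:ℤ)) + (c 1:ℤ) + (-(c 2:ℤ))) by rw [he3]; ring,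
        show (k:ℤ) * e4 = (k:ℤ) * ((c 0:ℤ) + (-(c 1:ℤ)) + (-(c 2:ℤ))) by rw [he4]; ring,
        show (k:ℤ) * (-e4) = (k:ℤ) * ((-(c 0:ℤ)) + (c 1:ℤ) + (c 2:ℤ)) by rw [he4]; ring]
    simp only [key, mul_neg]
    ring
  -- divisibility characterizations
  have hd1 : (n:ℤ) ∣ e1 ↔ c 0 + c 1 + c 2 = n := by
    rw [aux_dvd_iff_n e1 (by rw [he1]; omega) (by rw [he1]; push_cast; omega)]
    rw [he1]; omega
  have hd2 : (n:ℤ) ∣ e2 ↔ c 0 + c 1 = c 2 := by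
    rw [aux_dvd_iff_zero e2 (by rw [he2]; omega)]
    rw [he2]; omega
  have hd3 : (n:ℤ) ∣ e3 ↔ c 0 + c 2 = c 1 := by
    rw [aux_dvd_iff_zero e3 (by rw [he3]; omega)]
    rw [he3]; omega
  have hd4 : (n:ℤ) ∣ e4 ↔ c 1 + c 2 = c 0 := by
    rw [aux_dvd_iff_zero e4 (by rw [he4]; omega)]
    rw [he4]; omega
  have hdneg : ∀ s : ℤ, ((n:ℤ) ∣ -s) ↔ ((n:ℤ) ∣ s) := fun s => dvd_neg
  -- total sum over range n
  have hT : ∑ k ∈ Finset.range n, f k =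
      2 * ((if c 0 + c 1 + c 2 = n then (n:ℂ) else 0)
        + (if c 0 + c 1 = c 2 then (n:ℂ) else 0)
        + (if c 0 + c 2 = c 1 then (n:ℂ) else 0)
        + (if c 1 + c 2 = c 0 then (n:ℂ) else 0)) := by
    simp_rw [hexp]
    rw [Finset.sum_add_distrib, Finset.sum_add_distrib, Finset.sum_add_distrib,
        Finset.sum_add_distrib, Finset.sum_add_distrib, Finset.sum_add_distrib,
        Finset.sum_add_distrib]
    rw [aux_geom hn0 hζ e1, aux_geom hn0 hζ (-e1), aux_geom hn0 hζ e2, aux_geom hn0 hζ (-e2),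
        aux_geom hn0 hζ e3, aux_geom hn0 hζ (-e3), aux_geom hn0 hζ e4, aux_geom hn0 hζ (-e4)]
    simp only [hdneg, hd1, hd2, hd3, hd4]
    ring
  -- symmetry
  have hsym : ∀ k : ℕ, k ≤ n → f (n - k) = f k := by
    intro k hk
    rw [hf]
    refine Finset.prod_congr rfl fun i _ => ?_
    have hcast2 : ((n - k : ℕ) : ℤ) = (n:ℤ) - (k:ℤ) := by omega
    have hone' : ζ ^ ((n:ℕ):ℤ) = 1 := by
      rw [zpow_natCast]; exact hζ.pow_eq_one
    have hone : ζ ^ ((n:ℤ) * (c i:ℤ)) = 1 := by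
      rw [zpow_mul, hone', one_zpow]
    have h1 : ζ ^ (((n - k : ℕ) : ℤ) * (c i:ℤ)) = ζ ^ (-((k:ℤ) * (c i:ℤ))) := by
      rw [hcast2, show ((n:ℤ) - (k:ℤ)) * (c i:ℤ)
            = (n:ℤ) * (c i:ℤ) + (-((k:ℤ) * (c i:ℤ))) by ring,
          zpow_add₀ hz, hone, one_mul]
    have h2 : ζ ^ (-(((n - k : ℕ) : ℤ) * (c i:ℤ))) = ζ ^ ((k:ℤ) * (c i:ℤ)) := by
      rw [zpow_neg, h1, zpow_neg, inv_inv]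
    rw [h1, h2, add_comm]
  -- pairing
  have hpair : ∑ k ∈ Finset.Ioc m (2*m), f k = ∑ k ∈ Finset.Ioc 0 m, f k := by
    refine Finset.sum_nbij' (fun k => n - k) (fun k => n - k) ?_ ?_ ?_ ?_ ?_
    · intro a ha; simp only [Finset.mem_Ioc] at *; omega
    · intro a ha; simp only [Finset.mem_Ioc] at *; omega
    · intro a ha; simp only [Finset.mem_Ioc] at ha; show n - (n - a) = a; omega
    · intro a ha; simp only [Finset.mem_Ioc] at ha; show n - (n - a) = a; omega
    · intro a ha
      simp only [Finset.mem_Ioc] at ha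
      have h := hsym (n - a) (by omega)
      rw [show n - (n - a) = a by omega] at h
      exact h
  have hsplit : ∑ k ∈ Finset.range n, f k = f 0 + 2 * ∑ k ∈ Finset.Ioc 0 m, f k := by
    have hrange : Finset.range n = insert 0 (Finset.Ioc 0 (2*m)) := by
      ext x; simp only [Finset.mem_range, Finset.mem_insert, Finset.mem_Ioc]; omega
    rw [hrange, Finset.sum_insert (by simp)]
    rw [← Finset.sum_Ioc_consecutive f (Nat.zero_le m) (by omega : m ≤ 2*m), hpair]
    ring
  have hf0 : f 0 = 8 := by
    rw [hf]
    norm_num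
  have hIcc : Finset.Icc 1 m = Finset.Ioc 0 m := by
    ext x; simp; omega
  have hkey : ∑ k ∈ Finset.Icc 1 m, f k = ((∑ k ∈ Finset.range n, f k) - 8) / 2 := by
    rw [hIcc, hsplit, hf0]; ring
  have hgoalsum : (∑ k ∈ Finset.Icc 1 m,
      ∏ i : Fin 3, (ζ ^ ((k : ℤ) * (c i : ℤ)) + ζ ^ (-((k : ℤ) * (c i : ℤ)))))
      = ∑ k ∈ Finset.Icc 1 m, f k := rfl
  rw [hgoalsum, hkey]
  have hqc : (q:ℂ) ≠ 0 := Nat.cast_ne_zero.mpr (by omega)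
  have hnc : (n:ℂ) ≠ 0 := Nat.cast_ne_zero.mpr hn0.ne'
  by_cases hP : c 0 + c 1 + c 2 = q - 1 ∨ c 0 + c 1 + c 2 = 2 * max (max (c 0) (c 1)) (c 2)
  · rw [if_pos hP]
    have hTval : ∑ k ∈ Finset.range n, f k = 2 * (n:ℂ) := by
      rw [hT]
      have : (c 0 + c 1 + c 2 = n) ∨ (c 0 + c 1 = c 2) ∨ (c 0 + c 2 = c 1) ∨ (c 1 + c 2 = c 0) := by
        omega
      rcases this with h | h | h | h
      · rw [if_pos h, if_neg (by omega), if_neg (by omega), if_neg (by omega)]; ring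
      · rw [if_neg (by omega), if_pos h, if_neg (by omega), if_neg (by omega)]; ring
      · rw [if_neg (by omega), if_neg (by omega), if_pos h, if_neg (by omega)]; ring
      · rw [if_neg (by omega), if_neg (by omega), if_neg (by omega), if_pos h]; ring
    rw [hTval]
    have hqn : (q:ℂ) = (n:ℂ) + 1 := by rw [← hcast]; ring
    rw [hqn]
    have hn1 : (n:ℂ) + 1 ≠ 0 := by rw [← hqn]; exact hqc
    field_simp
    ring
  · rw [if_neg hP]
    have hTval : ∑ k ∈ Finset.range n, f k = 0 := by
      rw [hT, if_neg (by omega), if_neg (by omega), if_neg (by omega), if_neg (by omega)]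
      ring
    rw [hTval]
    have hqn : (q:ℂ) = (n:ℂ) + 1 := by rw [← hcast]; ring
    rw [hqn]
    have hn1 : (n:ℂ) + 1 ≠ 0 := by rw [← hqn]; exact hqc
    field_simp
    ring
end

section
/- Let q ≥ 2 be an even integer, ζ = exp(2πi/(q+1)), and c_1, c_2 integers with 1 ≤ c_i ≤ q/2. Then (q-1)/(q+1) - (1/(q+1)) Σ_{k=1}^{q/2} (ζ^{k c_1} + ζ^{-k c_1})(ζ^{k c_2} + ζ^{-k c_2}) equals 0 if c_1 = c_2 and equals 1 if c_1 ≠ c_2. -/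
lemma aux_sum (x : ℂ) (hx0 : x ≠ 0) (h : ℕ) (hpow : x ^ (2*h+1) = 1) (hx1 : x ≠ 1) :
    ∑ k ∈ Finset.Icc 1 h, (x ^ (k:ℤ) + x ^ (-(k:ℤ))) = -1 := by
  have hx1' : x - 1 ≠ 0 := sub_ne_zero.mpr hx1
  apply mul_left_cancel₀ hx1'
  rw [Finset.mul_sum, ← Finset.Ico_add_one_right_eq_Icc, Finset.sum_Ico_eq_sum_range]
  have step : ∀ i ∈ Finset.range (h + 1 - 1),
      (x - 1) * (x ^ ((1 + i : ℕ):ℤ) + x ^ (-((1 + i : ℕ):ℤ)))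
      = (fun j => x ^ (j+1) - (x ^ j)⁻¹) (i+1) - (fun j => x ^ (j+1) - (x ^ j)⁻¹) i := by
    intro i _
    have hp : x ^ (i+1) ≠ 0 := pow_ne_zero _ hx0
    have hp2 : x ^ i ≠ 0 := pow_ne_zero _ hx0
    simp only [zpow_neg, zpow_natCast]
    field_simp
    ring
  rw [Finset.sum_congr rfl step, Finset.sum_range_sub (fun j => x ^ (j+1) - (x ^ j)⁻¹)]
  have hinv : x ^ (h + 1 - 1 + 1) = (x ^ (h + 1 - 1))⁻¹ := by
    simp only [Nat.add_sub_cancel]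
    refine eq_inv_of_mul_eq_one_left ?_
    rw [← pow_add, show h + 1 + h = 2*h+1 by ring, hpow]
  rw [hinv]
  simp

theorem stmt_6 (q : ℕ) (hq : 2 ≤ q) (hqe : Even q) (c₁ c₂ : ℕ)
    (hc₁ : 1 ≤ c₁ ∧ c₁ ≤ q / 2) (hc₂ : 1 ≤ c₂ ∧ c₂ ≤ q / 2) :
    ((q : ℂ) - 1) / ((q : ℂ) + 1)
        - (1 / ((q : ℂ) + 1)) * ∑ k ∈ Finset.Icc 1 (q / 2),
            (Complex.exp (2 * Real.pi * Complex.I / (q + 1)) ^ ((k : ℤ) * (c₁ : ℤ)) +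
             Complex.exp (2 * Real.pi * Complex.I / (q + 1)) ^ (-((k : ℤ) * (c₁ : ℤ)))) *
            (Complex.exp (2 * Real.pi * Complex.I / (q + 1)) ^ ((k : ℤ) * (c₂ : ℤ)) +
             Complex.exp (2 * Real.pi * Complex.I / (q + 1)) ^ (-((k : ℤ) * (c₂ : ℤ)))) =
      if c₁ = c₂ then 0 else 1 := by
  obtain ⟨h, hh⟩ := hqe
  set ζ := Complex.exp (2 * Real.pi * Complex.I / (q + 1)) with hζdef
  have hζ0 : ζ ≠ 0 := Complex.exp_ne_zero _
  have hprim : IsPrimitiveRoot ζ (q + 1) := by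
    have := Complex.isPrimitiveRoot_exp (q + 1) (by omega)
    convert this using 3
    push_cast; ring
  have hq2 : q / 2 = h := by omega
  rw [hq2]
  set X := ζ ^ ((c₁:ℤ) + c₂) with hX
  set Y := ζ ^ ((c₁:ℤ) - c₂) with hY
  have hterm : ∀ k ∈ Finset.Icc 1 h,
      (ζ ^ ((k:ℤ) * c₁) + ζ ^ (-((k:ℤ) * c₁))) * (ζ ^ ((k:ℤ) * c₂) + ζ ^ (-((k:ℤ) * c₂)))
        = (X ^ (k:ℤ) + X ^ (-(k:ℤ))) + (Y ^ (k:ℤ) + Y ^ (-(k:ℤ))) := by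
    intro k _
    rw [hX, hY]
    simp only [← zpow_mul, zpow_neg]
    rw [show ((c₁:ℤ) + c₂) * k = (k:ℤ) * c₁ + (k:ℤ) * c₂ by ring,
        show ((c₁:ℤ) - c₂) * k = (k:ℤ) * c₁ - (k:ℤ) * c₂ by ring,
        zpow_add₀ hζ0, zpow_sub₀ hζ0]
    have hu : ζ ^ ((k:ℤ) * c₁) ≠ 0 := zpow_ne_zero _ hζ0
    have hv : ζ ^ ((k:ℤ) * c₂) ≠ 0 := zpow_ne_zero _ hζ0
    field_simp
    ring
  rw [Finset.sum_congr rfl hterm, Finset.sum_add_distrib]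
  -- helper facts
  have hpow : ∀ a : ℤ, (ζ ^ a) ^ (2 * h + 1) = 1 := by
    intro a
    rw [← zpow_natCast (ζ ^ a), ← zpow_mul, mul_comm, zpow_mul, zpow_natCast,
        show 2 * h + 1 = q + 1 by omega, hprim.pow_eq_one, one_zpow]
  have hne1 : ∀ a : ℤ, a ≠ 0 → |a| < (q:ℤ) + 1 → ζ ^ a ≠ 1 := by
    intro a ha hlt habs
    rw [hprim.zpow_eq_one_iff_dvd] at habs
    exact ha (Int.eq_zero_of_abs_lt_dvd (by exact_mod_cast habs) (by push_cast; omega))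
  have hXsum : ∑ k ∈ Finset.Icc 1 h, (X ^ (k:ℤ) + X ^ (-(k:ℤ))) = -1 := by
    refine aux_sum X (zpow_ne_zero _ hζ0) h (hpow _) (hne1 _ (by omega) ?_)
    have h1 : 1 ≤ c₁ := hc₁.1
    have h2 : c₁ ≤ h := hq2 ▸ hc₁.2
    have h3 : 1 ≤ c₂ := hc₂.1
    have h4 : c₂ ≤ h := hq2 ▸ hc₂.2
    rw [abs_of_nonneg (by positivity)]
    push_cast; omega
  have hq1 : (q : ℂ) + 1 ≠ 0 := by
    have := Nat.cast_add_one_ne_zero (R := ℂ) q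
    push_cast at this ⊢; exact this
  by_cases hcc : c₁ = c₂
  · have hY1 : Y = 1 := by rw [hY, hcc, sub_self, zpow_zero]
    have hYsum : ∑ k ∈ Finset.Icc 1 h, (Y ^ (k:ℤ) + Y ^ (-(k:ℤ))) = 2 * h := by
      rw [hY1]; simp [Nat.card_Icc]; push_cast; ring
    rw [hXsum, hYsum, if_pos hcc]
    have hhq : (2 * h : ℂ) = q := by push_cast; rw [hh]; push_cast; ring
    rw [hhq]
    field_simp
    ring
  · have hYsum : ∑ k ∈ Finset.Icc 1 h, (Y ^ (k:ℤ) + Y ^ (-(k:ℤ))) = -1 := by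
      refine aux_sum Y (zpow_ne_zero _ hζ0) h (hpow _) (hne1 _ ?_ ?_)
      · simp only [sub_ne_zero]; exact_mod_cast hcc
      · have h2 : c₁ ≤ h := hq2 ▸ hc₁.2
        have h4 : c₂ ≤ h := hq2 ▸ hc₂.2
        rw [abs_lt]; constructor <;> push_cast <;> omega
    rw [hXsum, hYsum, if_neg hcc]
    field_simp
    ring
end

section
/- For every real number q ≥ 2: 1/(q²(q²-1)²) + 1/q² + (q-2)/(2(q-1)²) + q/(2(q+1)²) = (q⁵ - q³ - 3q² + 2)/(q²(q²-1)²), and this quantity is strictly less than 1/2. -/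
theorem stmt_9 (q : ℝ) (hq : 2 ≤ q) :
    (1 / (q ^ 2 * (q ^ 2 - 1) ^ 2) + 1 / q ^ 2 + (q - 2) / (2 * (q - 1) ^ 2)
        + q / (2 * (q + 1) ^ 2) =
      (q ^ 5 - q ^ 3 - 3 * q ^ 2 + 2) / (q ^ 2 * (q ^ 2 - 1) ^ 2)) ∧
    (q ^ 5 - q ^ 3 - 3 * q ^ 2 + 2) / (q ^ 2 * (q ^ 2 - 1) ^ 2) < 1 / 2 := by
  have h0 : (0:ℝ) < q := by linarith
  have h1 : (0:ℝ) < q - 1 := by linarith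
  have h2 : (0:ℝ) < q + 1 := by linarith
  have hsq : q ^ 2 - 1 = (q - 1) * (q + 1) := by ring
  have hd : (0:ℝ) < q ^ 2 * (q ^ 2 - 1) ^ 2 := by
    rw [hsq]; positivity
  constructor
  · have h3 : (0:ℝ) < q ^ 2 - 1 := by nlinarith
    field_simp
    ring
  · rw [div_lt_div_iff₀ hd (by norm_num)]
    nlinarith [sq_nonneg q, sq_nonneg (q-2), pow_le_pow_left₀ (by norm_num : (0:ℝ) ≤ 2) hq 6, sq_nonneg (q^3 - q), sq_nonneg (q^2-2)]
end

section
/- Let q ≥ 6 be an integer. There is no integer c with 1 ≤ c ≤ q/2 such that for every integer k with 1 ≤ k ≤ q/2 one has 2cos(2πkc/(q+1)) ∈ {1, -1}. -/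
theorem stmt_12 (q : ℕ) (hq : 6 ≤ q) :
    ¬ ∃ c : ℕ, 1 ≤ c ∧ c ≤ q / 2 ∧ ∀ k : ℕ, 1 ≤ k → k ≤ q / 2 →
        (2 * Real.cos (2 * Real.pi * k * c / (q + 1)) = 1 ∨
         2 * Real.cos (2 * Real.pi * k * c / (q + 1)) = -1) := by
  rintro ⟨c, hc1, hc2, h⟩
  have h1 := h 1 (by norm_num) (by omega)
  have h3 := h 3 (by norm_num) (by omega)
  have e3 : (2 * Real.pi * (3 : ℕ) * c / (q + 1))
      = 3 * (2 * Real.pi * (1 : ℕ) * c / (q + 1)) := by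
    push_cast; ring
  rw [e3, Real.cos_three_mul] at h3
  set y := Real.cos (2 * Real.pi * (1 : ℕ) * c / (q + 1)) with hy
  have hy12 : y = 1 / 2 ∨ y = -(1 / 2) := by
    rcases h1 with h1 | h1
    · left; linarith
    · right; linarith
  rcases hy12 with hy2 | hy2 <;> rw [hy2] at h3 <;> rcases h3 with h3 | h3 <;> norm_num at h3
end

section
/- Let r ≥ 1 and let N : Fin r → Fin r → Fin r → ℕ be fusion rules with distinguished unit index 1, satisfying: N(1,i,k) = N(i,1,k) = δ_{i,k} (neutral), there is an involution * on indices with N(i,k,1) = N(k,i,1) = δ_{i*,k} (dual), and Frobenius reciprocity N(i,j,k) = N(i*,k,j) = N(k,j*,i). Suppose indices i_1,...,i_9 satisfy N(i_4,i_1,i_6), N(i_5,i_4,i_2), N(i_5,i_6,i_3), N(i_7,i_9,i_1), N(i_2,i_7,i_8), N(i_8,i_9,i_3) all nonzero, and Σ_k N(i_4,i_7,k)·N(i_5*,i_8,k)·N(i_6,i_9*,k) = 0. Then i_j ≠ 1 for all j ∈ {4,5,6,7,8,9}. -/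
theorem stmt_13 (r : ℕ) (hr : 1 ≤ r) (N : Fin r → Fin r → Fin r → ℕ)
    (u : Fin r) (st : Fin r → Fin r)
    (hst : ∀ i, st (st i) = i)
    (hneut : ∀ i k, N u i k = if i = k then 1 else 0)
    (hneut' : ∀ i k, N i u k = if i = k then 1 else 0)
    (hdual : ∀ i k, N i k u = if st i = k then 1 else 0)
    (hdual' : ∀ i k, N k i u = if st i = k then 1 else 0)
    (hfrob : ∀ i j k, N i j k = N (st i) k j ∧ N i j k = N k (st j) i)
    (i1 i2 i3 i4 i5 i6 i7 i8 i9 : Fin r)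
    (h1 : N i4 i1 i6 ≠ 0) (h2 : N i5 i4 i2 ≠ 0) (h3 : N i5 i6 i3 ≠ 0)
    (h4 : N i7 i9 i1 ≠ 0) (h5 : N i2 i7 i8 ≠ 0) (h6 : N i8 i9 i3 ≠ 0)
    (hz : ∑ k, N i4 i7 k * N (st i5) i8 k * N i6 (st i9) k = 0) :
    i4 ≠ u ∧ i5 ≠ u ∧ i6 ≠ u ∧ i7 ≠ u ∧ i8 ≠ u ∧ i9 ≠ u := by
  have hsz : ∀ k : Fin r, N i4 i7 k * N (st i5) i8 k * N i6 (st i9) k = 0 :=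
    fun k => (Finset.sum_eq_zero_iff.mp hz) k (Finset.mem_univ k)
  have hstu : st u = u := by
    have h := (hdual u u).symm.trans (hneut u u)
    by_contra hne
    rw [if_neg hne, if_pos rfl] at h
    exact zero_ne_one h
  refine ⟨?_, ?_, ?_, ?_, ?_, ?_⟩ <;> intro h
  · -- i4 = u
    rw [h] at h1 h2 hsz
    have e1 : i1 = i6 := by
      by_contra hne; exact h1 (by rw [hneut, if_neg hne])
    have e2 : i5 = i2 := by
      by_contra hne; exact h2 (by rw [hneut', if_neg hne])
    have hterm := hsz i7
    have f1 : N u i7 i7 = 1 := by rw [hneut, if_pos rfl]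
    have f2 : N (st i5) i8 i7 ≠ 0 := by
      rw [← (hfrob i5 i7 i8).1, e2]; exact h5
    have f3 : N i6 (st i9) i7 ≠ 0 := by
      rw [← (hfrob i7 i9 i6).2, ← e1]; exact h4
    rw [f1, one_mul] at hterm
    rcases mul_eq_zero.mp hterm with h' | h'
    exacts [f2 h', f3 h']
  · -- i5 = u
    rw [h] at h2 h3 hsz
    have e1 : i4 = i2 := by
      by_contra hne; exact h2 (by rw [hneut, if_neg hne])
    have e2 : i6 = i3 := by
      by_contra hne; exact h3 (by rw [hneut, if_neg hne])
    have hterm := hsz i8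
    have f1 : N i4 i7 i8 ≠ 0 := by rw [e1]; exact h5
    have f2 : N (st u) i8 i8 = 1 := by rw [hstu, hneut, if_pos rfl]
    have f3 : N i6 (st i9) i8 ≠ 0 := by
      rw [← (hfrob i8 i9 i6).2, e2]; exact h6
    rw [f2, mul_one] at hterm
    rcases mul_eq_zero.mp hterm with h' | h'
    exacts [f1 h', f3 h']
  · -- i6 = u
    rw [h] at h1 h3 hsz
    have e1 : st i4 = i1 := by
      by_contra hne; exact h1 (by rw [hdual, if_neg hne])
    have e2 : i5 = i3 := by
      by_contra hne; exact h3 (by rw [hneut', if_neg hne])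
    have hterm := hsz (st i9)
    have f1 : N i4 i7 (st i9) ≠ 0 := by
      rw [(hfrob i4 i7 (st i9)).1, ← (hfrob i7 i9 (st i4)).2, e1]; exact h4
    have f2 : N (st i5) i8 (st i9) ≠ 0 := by
      rw [(hfrob (st i5) i8 (st i9)).1, hst, ← (hfrob i8 i9 i5).2, e2]; exact h6
    have f3 : N u (st i9) (st i9) = 1 := by rw [hneut, if_pos rfl]
    rw [f3, mul_one] at hterm
    rcases mul_eq_zero.mp hterm with h' | h'
    exacts [f1 h', f2 h']
  · -- i7 = u
    rw [h] at h4 h5 hsz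
    have e1 : i9 = i1 := by
      by_contra hne; exact h4 (by rw [hneut, if_neg hne])
    have e2 : i2 = i8 := by
      by_contra hne; exact h5 (by rw [hneut', if_neg hne])
    have hterm := hsz i4
    have f1 : N i4 u i4 = 1 := by rw [hneut', if_pos rfl]
    have f2 : N (st i5) i8 i4 ≠ 0 := by
      rw [← (hfrob i5 i4 i8).1, ← e2]; exact h2
    have f3 : N i6 (st i9) i4 ≠ 0 := by
      rw [← (hfrob i4 i9 i6).2, e1]; exact h1
    rw [f1, one_mul] at hterm
    rcases mul_eq_zero.mp hterm with h' | h'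
    exacts [f2 h', f3 h']
  · -- i8 = u
    rw [h] at h5 h6 hsz
    have e1 : st i2 = i7 := by
      by_contra hne; exact h5 (by rw [hdual, if_neg hne])
    have e2 : i9 = i3 := by
      by_contra hne; exact h6 (by rw [hneut, if_neg hne])
    have hterm := hsz (st i5)
    have f1 : N i4 i7 (st i5) ≠ 0 := by
      rw [← e1, (hfrob i4 (st i2) (st i5)).2, hst, ← (hfrob i5 i4 i2).1]
      exact h2
    have f2 : N (st i5) u (st i5) = 1 := by rw [hneut', if_pos rfl]
    have f3 : N i6 (st i9) (st i5) ≠ 0 := by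
      rw [(hfrob i6 (st i9) (st i5)).2, hst, ← (hfrob i5 i6 i9).1, e2]
      exact h3
    rw [f2, mul_one] at hterm
    rcases mul_eq_zero.mp hterm with h' | h'
    exacts [f1 h', f3 h']
  · -- i9 = u
    rw [h] at h4 h6 hsz
    have e1 : i7 = i1 := by
      by_contra hne; exact h4 (by rw [hneut', if_neg hne])
    have e2 : i8 = i3 := by
      by_contra hne; exact h6 (by rw [hneut', if_neg hne])
    have hterm := hsz i6
    have f1 : N i4 i7 i6 ≠ 0 := by rw [e1]; exact h1
    have f2 : N (st i5) i8 i6 ≠ 0 := by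
      rw [← (hfrob i5 i6 i8).1, e2]; exact h3
    have f3 : N i6 (st u) i6 = 1 := by rw [hstu, hneut', if_pos rfl]
    rw [f3, mul_one] at hterm
    rcases mul_eq_zero.mp hterm with h' | h'
    exacts [f1 h', f2 h']
end

section
/- Let r ≥ 1 and let N : Fin r → Fin r → Fin r → ℕ be fusion rules with unit index 1 satisfying the neutral, dual, and Frobenius reciprocity axioms. Assume there exists an index k_0 such that N(i,j,k_0) ≠ 0 for all i,j ≠ 1. Then there do not exist indices i_1,...,i_9 satisfying simultaneously: N(i_4,i_1,i_6), N(i_5,i_4,i_2), N(i_5,i_6,i_3), N(i_7,i_9,i_1), N(i_2,i_7,i_8), N(i_8,i_9,i_3) all nonzero, and Σ_k N(i_4,i_7,k)·N(i_5*,i_8,k)·N(i_6,i_9*,k) = 0. -/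
theorem stmt_14 (r : ℕ) (hr : 1 ≤ r) (N : Fin r → Fin r → Fin r → ℕ)
    (u : Fin r) (st : Fin r → Fin r)
    (hst : ∀ i, st (st i) = i)
    (hneut : ∀ i k, N u i k = if i = k then 1 else 0)
    (hneut' : ∀ i k, N i u k = if i = k then 1 else 0)
    (hdual : ∀ i k, N i k u = if st i = k then 1 else 0)
    (hdual' : ∀ i k, N k i u = if st i = k then 1 else 0)
    (hfrob : ∀ i j k, N i j k = N (st i) k j ∧ N i j k = N k (st j) i)
    (k₀ : Fin r) (hk₀ : ∀ i j, i ≠ u → j ≠ u → N i j k₀ ≠ 0) :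
    ¬ ∃ i1 i2 i3 i4 i5 i6 i7 i8 i9 : Fin r,
        N i4 i1 i6 ≠ 0 ∧ N i5 i4 i2 ≠ 0 ∧ N i5 i6 i3 ≠ 0 ∧
        N i7 i9 i1 ≠ 0 ∧ N i2 i7 i8 ≠ 0 ∧ N i8 i9 i3 ≠ 0 ∧
        ∑ k, N i4 i7 k * N (st i5) i8 k * N i6 (st i9) k = 0 := by
  have hstu : st u = u := by
    have h1 := hdual u u
    have h2 := hneut u u
    by_contra h
    simp [h] at h1
    simp [h1] at h2
  rintro ⟨i1, i2, i3, i4, i5, i6, i7, i8, i9, h1, h2, h3, h4, h5, h6, hsum⟩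
  have frob1 : ∀ i j k, N i j k = N (st i) k j := fun i j k => (hfrob i j k).1
  have frob2 : ∀ i j k, N i j k = N k (st j) i := fun i j k => (hfrob i j k).2
  have contra : ∀ k : Fin r, N i4 i7 k ≠ 0 → N (st i5) i8 k ≠ 0 →
      N i6 (st i9) k ≠ 0 → False := by
    intro k ha hb hc
    have hk : N i4 i7 k * N (st i5) i8 k * N i6 (st i9) k = 0 :=
      (Finset.sum_eq_zero_iff.mp hsum) k (Finset.mem_univ k)
    rcases Nat.mul_eq_zero.mp hk with h | h
    · rcases Nat.mul_eq_zero.mp h with h' | h'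
      · exact ha h'
      · exact hb h'
    · exact hc h
  by_cases e4 : i4 = u
  · have q1 : i1 = i6 := by subst e4; simpa [hneut] using h1
    have q2 : i5 = i2 := by subst e4; simpa [hneut'] using h2
    refine contra i7 ?_ ?_ ?_
    · rw [e4, hneut]; simp
    · rw [q2, ← frob1 i2 i7 i8]; exact h5
    · rw [← frob2 i7 i9 i6, ← q1]; exact h4
  by_cases e7 : i7 = u
  · have q1 : i9 = i1 := by subst e7; simpa [hneut] using h4
    have q2 : i2 = i8 := by subst e7; simpa [hneut'] using h5
    refine contra i4 ?_ ?_ ?_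
    · rw [e7, hneut']; simp
    · rw [← q2, ← frob1 i5 i4 i2]; exact h2
    · rw [q1, ← frob2 i4 i1 i6]; exact h1
  by_cases e5 : i5 = u
  · have q1 : i4 = i2 := by subst e5; simpa [hneut] using h2
    have q2 : i6 = i3 := by subst e5; simpa [hneut] using h3
    refine contra i8 ?_ ?_ ?_
    · rw [q1]; exact h5
    · rw [e5, hstu, hneut]; simp
    · rw [q2, ← frob2 i8 i9 i3]; exact h6
  by_cases e8 : i8 = u
  · have q1 : st i2 = i7 := by subst e8; simpa [hdual] using h5
    have q2 : i9 = i3 := by subst e8; simpa [hneut] using h6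
    refine contra (st i5) ?_ ?_ ?_
    · rw [← q1, ← frob2 (st i5) i2 i4, ← frob1 i5 i4 i2]; exact h2
    · rw [e8, hneut']; simp
    · rw [q2, ← frob2 (st i5) i3 i6, ← frob1 i5 i6 i3]; exact h3
  by_cases e6 : i6 = u
  · have q1 : st i4 = i1 := by subst e6; simpa [hdual] using h1
    have q2 : i5 = i3 := by subst e6; simpa [hneut'] using h3
    refine contra (st i9) ?_ ?_ ?_
    · rw [frob1 i4 i7 (st i9), ← frob2 i7 i9 (st i4), q1]; exact h4
    · rw [← frob1 i5 (st i9) i8, ← frob2 i8 i9 i5, q2]; exact h6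
    · rw [e6, hneut]; simp
  by_cases e9 : i9 = u
  · have q1 : i7 = i1 := by subst e9; simpa [hneut'] using h4
    have q2 : i8 = i3 := by subst e9; simpa [hneut'] using h6
    refine contra i6 ?_ ?_ ?_
    · rw [q1]; exact h1
    · rw [q2, ← frob1 i5 i6 i3]; exact h3
    · rw [e9, hstu, hneut']; simp
  · have e5' : st i5 ≠ u := fun h => e5 (by rw [← hst i5, h, hstu])
    have e9' : st i9 ≠ u := fun h => e9 (by rw [← hst i9, h, hstu])
    exact contra k₀ (hk₀ i4 i7 e4 e7) (hk₀ (st i5) i8 e5' e8) (hk₀ i6 (st i9) e6 e9')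
end

section
/- Let q ≥ 2 be an even integer. For integers c_1, c_2, c_3, c_4 with 1 ≤ c_i ≤ q/2, define F(c_1,c_2,c_3,c_4) = δ_{c_1,c_2}δ_{c_3,c_4} - #{ |q+1-2|x|| : x ∈ {c_1+c_2, c_3+c_4, c_1-c_2, c_3-c_4} } (where the cardinality is of the set of distinct values). Then F is invariant under every permutation of (c_1,c_2,c_3,c_4). -/
def X (q a b c d : ℤ) : ℤ :=
  (if a + b + c + d = 0 then (1:ℤ) else 0) +
  (if a + b + c - d = 0 then (1:ℤ) else 0) +
  (if a + b - c + d = 0 then (1:ℤ) else 0) +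
  (if a + b - c - d = 0 then (1:ℤ) else 0) +
  (if a - b + c + d = 0 then (1:ℤ) else 0) +
  (if a - b + c - d = 0 then (1:ℤ) else 0) +
  (if a - b - c + d = 0 then (1:ℤ) else 0) +
  (if a - b - c - d = 0 then (1:ℤ) else 0) +
  (if -a + b + c + d = 0 then (1:ℤ) else 0) +
  (if -a + b + c - d = 0 then (1:ℤ) else 0) +
  (if -a + b - c + d = 0 then (1:ℤ) else 0) +
  (if -a + b - c - d = 0 then (1:ℤ) else 0) +
  (if -a - b + c + d = 0 then (1:ℤ) else 0) +
  (if -a - b + c - d = 0 then (1:ℤ) else 0) +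
  (if -a - b - c + d = 0 then (1:ℤ) else 0) +
  (if -a - b - c - d = 0 then (1:ℤ) else 0) +
  2 * ((if a + b + c + d = q + 1 then (1:ℤ) else 0) +
  (if a + b + c - d = q + 1 then (1:ℤ) else 0) +
  (if a + b - c + d = q + 1 then (1:ℤ) else 0) +
  (if a + b - c - d = q + 1 then (1:ℤ) else 0) +
  (if a - b + c + d = q + 1 then (1:ℤ) else 0) +
  (if a - b + c - d = q + 1 then (1:ℤ) else 0) +
  (if a - b - c + d = q + 1 then (1:ℤ) else 0) +
  (if a - b - c - d = q + 1 then (1:ℤ) else 0) +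
  (if -a + b + c + d = q + 1 then (1:ℤ) else 0) +
  (if -a + b + c - d = q + 1 then (1:ℤ) else 0) +
  (if -a + b - c + d = q + 1 then (1:ℤ) else 0) +
  (if -a + b - c - d = q + 1 then (1:ℤ) else 0) +
  (if -a - b + c + d = q + 1 then (1:ℤ) else 0) +
  (if -a - b + c - d = q + 1 then (1:ℤ) else 0) +
  (if -a - b - c + d = q + 1 then (1:ℤ) else 0) +
  (if -a - b - c - d = q + 1 then (1:ℤ) else 0)) - 8

lemma Xab (q a b c d : ℤ) : X q b a c d = X q a b c d := by unfold X; ring_nf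
lemma Xac (q a b c d : ℤ) : X q c b a d = X q a b c d := by unfold X; ring_nf
lemma Xad (q a b c d : ℤ) : X q d b c a = X q a b c d := by unfold X; ring_nf
lemma Xbc (q a b c d : ℤ) : X q a c b d = X q a b c d := by unfold X; ring_nf
lemma Xbd (q a b c d : ℤ) : X q a d c b = X q a b c d := by unfold X; ring_nf
lemma Xcd (q a b c d : ℤ) : X q a b d c = X q a b c d := by unfold X; ring_nf

lemma card4 {a b c d : ℤ} (hac : a ≠ c) (hbd : b ≠ d) :
    (({a, b, c, d} : Finset ℤ).card : ℤ) =
      4 - ((if a = b then (1:ℤ) else 0) + (if a = d then 1 else 0) +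
           (if c = b then 1 else 0) + (if c = d then 1 else 0)) := by
  simp only [Finset.card_insert_eq_ite, Finset.mem_insert, Finset.mem_singleton,
    Finset.card_singleton]
  split_ifs <;> push_cast <;> omega

lemma gne (m a b : ℤ) (hm : 1 ≤ m) (ha : 1 ≤ a) (ha2 : a ≤ m) (hb : 1 ≤ b) (hb2 : b ≤ m) :
    abs (2 * m + 1 - 2 * abs (a + b)) ≠ abs (2 * m + 1 - 2 * abs (a - b)) := by
  have p1 := abs_choice (a + b); have p1' := abs_nonneg (a + b)
  have p3 := abs_choice (a - b); have p3' := abs_nonneg (a - b)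
  have q1 := abs_choice (2 * m + 1 - 2 * abs (a + b)); have q1' := abs_nonneg (2 * m + 1 - 2 * abs (a + b))
  have q3 := abs_choice (2 * m + 1 - 2 * abs (a - b)); have q3' := abs_nonneg (2 * m + 1 - 2 * abs (a - b))
  omega

lemma E1 (m a b c d : ℤ) (hm : 1 ≤ m) (ha : 1 ≤ a) (ha2 : a ≤ m) (hb : 1 ≤ b) (hb2 : b ≤ m)
    (hc : 1 ≤ c) (hc2 : c ≤ m) (hd : 1 ≤ d) (hd2 : d ≤ m) :
    2 * (if abs (2 * m + 1 - 2 * abs (a + b)) = abs (2 * m + 1 - 2 * abs (c + d)) then (1:ℤ) else 0) =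
      (if a + b - c - d = 0 then (1:ℤ) else 0) + (if -a - b + c + d = 0 then (1:ℤ) else 0) + 2 * (if a + b + c + d = 2 * m + 1 then (1:ℤ) else 0) := by
  have p1 := abs_choice (a + b); have p1' := abs_nonneg (a + b)
  have p2 := abs_choice (c + d); have p2' := abs_nonneg (c + d)
  have p3 := abs_choice (a - b); have p3' := abs_nonneg (a - b)
  have p4 := abs_choice (c - d); have p4' := abs_nonneg (c - d)
  have q1 := abs_choice (2 * m + 1 - 2 * abs (a + b)); have q1' := abs_nonneg (2 * m + 1 - 2 * abs (a + b))
  have q2 := abs_choice (2 * m + 1 - 2 * abs (c + d)); have q2' := abs_nonneg (2 * m + 1 - 2 * abs (c + d))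
  have q3 := abs_choice (2 * m + 1 - 2 * abs (a - b)); have q3' := abs_nonneg (2 * m + 1 - 2 * abs (a - b))
  have q4 := abs_choice (2 * m + 1 - 2 * abs (c - d)); have q4' := abs_nonneg (2 * m + 1 - 2 * abs (c - d))
  split_ifs <;> omega

lemma E2 (m a b c d : ℤ) (hm : 1 ≤ m) (ha : 1 ≤ a) (ha2 : a ≤ m) (hb : 1 ≤ b) (hb2 : b ≤ m)
    (hc : 1 ≤ c) (hc2 : c ≤ m) (hd : 1 ≤ d) (hd2 : d ≤ m) :
    2 * (if abs (2 * m + 1 - 2 * abs (a - b)) = abs (2 * m + 1 - 2 * abs (c - d)) then (1:ℤ) else 0)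
      + 2 * ((if a = b then (1:ℤ) else 0) * (if c = d then (1:ℤ) else 0)) =
      (if a - b - c + d = 0 then (1:ℤ) else 0) + (if -a + b + c - d = 0 then (1:ℤ) else 0) + (if a - b + c - d = 0 then (1:ℤ) else 0) + (if -a + b - c + d = 0 then (1:ℤ) else 0) := by
  have p1 := abs_choice (a + b); have p1' := abs_nonneg (a + b)
  have p2 := abs_choice (c + d); have p2' := abs_nonneg (c + d)
  have p3 := abs_choice (a - b); have p3' := abs_nonneg (a - b)
  have p4 := abs_choice (c - d); have p4' := abs_nonneg (c - d)
  have q1 := abs_choice (2 * m + 1 - 2 * abs (a + b)); have q1' := abs_nonneg (2 * m + 1 - 2 * abs (a + b))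
  have q2 := abs_choice (2 * m + 1 - 2 * abs (c + d)); have q2' := abs_nonneg (2 * m + 1 - 2 * abs (c + d))
  have q3 := abs_choice (2 * m + 1 - 2 * abs (a - b)); have q3' := abs_nonneg (2 * m + 1 - 2 * abs (a - b))
  have q4 := abs_choice (2 * m + 1 - 2 * abs (c - d)); have q4' := abs_nonneg (2 * m + 1 - 2 * abs (c - d))
  split_ifs <;> omega

lemma E3 (m a b c d : ℤ) (hm : 1 ≤ m) (ha : 1 ≤ a) (ha2 : a ≤ m) (hb : 1 ≤ b) (hb2 : b ≤ m)
    (hc : 1 ≤ c) (hc2 : c ≤ m) (hd : 1 ≤ d) (hd2 : d ≤ m) :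
    2 * (if abs (2 * m + 1 - 2 * abs (a + b)) = abs (2 * m + 1 - 2 * abs (c - d)) then (1:ℤ) else 0) =
      (if a + b + c - d = 0 then (1:ℤ) else 0) + (if -a - b - c + d = 0 then (1:ℤ) else 0) + (if a + b - c + d = 0 then (1:ℤ) else 0) + (if -a - b + c - d = 0 then (1:ℤ) else 0) + 2 * (if a + b + c - d = 2 * m + 1 then (1:ℤ) else 0) + 2 * (if a + b - c + d = 2 * m + 1 then (1:ℤ) else 0) := by
  have p1 := abs_choice (a + b); have p1' := abs_nonneg (a + b)
  have p2 := abs_choice (c + d); have p2' := abs_nonneg (c + d)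
  have p3 := abs_choice (a - b); have p3' := abs_nonneg (a - b)
  have p4 := abs_choice (c - d); have p4' := abs_nonneg (c - d)
  have q1 := abs_choice (2 * m + 1 - 2 * abs (a + b)); have q1' := abs_nonneg (2 * m + 1 - 2 * abs (a + b))
  have q2 := abs_choice (2 * m + 1 - 2 * abs (c + d)); have q2' := abs_nonneg (2 * m + 1 - 2 * abs (c + d))
  have q3 := abs_choice (2 * m + 1 - 2 * abs (a - b)); have q3' := abs_nonneg (2 * m + 1 - 2 * abs (a - b))
  have q4 := abs_choice (2 * m + 1 - 2 * abs (c - d)); have q4' := abs_nonneg (2 * m + 1 - 2 * abs (c - d))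
  split_ifs <;> omega

lemma E4 (m a b c d : ℤ) (hm : 1 ≤ m) (ha : 1 ≤ a) (ha2 : a ≤ m) (hb : 1 ≤ b) (hb2 : b ≤ m)
    (hc : 1 ≤ c) (hc2 : c ≤ m) (hd : 1 ≤ d) (hd2 : d ≤ m) :
    2 * (if abs (2 * m + 1 - 2 * abs (a - b)) = abs (2 * m + 1 - 2 * abs (c + d)) then (1:ℤ) else 0) =
      (if -a + b + c + d = 0 then (1:ℤ) else 0) + (if a - b - c - d = 0 then (1:ℤ) else 0) + (if a - b + c + d = 0 then (1:ℤ) else 0) + (if -a + b - c - d = 0 then (1:ℤ) else 0) + 2 * (if -a + b + c + d = 2 * m + 1 then (1:ℤ) else 0) + 2 * (if a - b + c + d = 2 * m + 1 then (1:ℤ) else 0) := by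
  have p1 := abs_choice (a + b); have p1' := abs_nonneg (a + b)
  have p2 := abs_choice (c + d); have p2' := abs_nonneg (c + d)
  have p3 := abs_choice (a - b); have p3' := abs_nonneg (a - b)
  have p4 := abs_choice (c - d); have p4' := abs_nonneg (c - d)
  have q1 := abs_choice (2 * m + 1 - 2 * abs (a + b)); have q1' := abs_nonneg (2 * m + 1 - 2 * abs (a + b))
  have q2 := abs_choice (2 * m + 1 - 2 * abs (c + d)); have q2' := abs_nonneg (2 * m + 1 - 2 * abs (c + d))
  have q3 := abs_choice (2 * m + 1 - 2 * abs (a - b)); have q3' := abs_nonneg (2 * m + 1 - 2 * abs (a - b))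
  have q4 := abs_choice (2 * m + 1 - 2 * abs (c - d)); have q4' := abs_nonneg (2 * m + 1 - 2 * abs (c - d))
  split_ifs <;> omega

lemma core (m a b c d : ℤ) (hm : 1 ≤ m) (ha : 1 ≤ a) (ha2 : a ≤ m) (hb : 1 ≤ b) (hb2 : b ≤ m)
    (hc : 1 ≤ c) (hc2 : c ≤ m) (hd : 1 ≤ d) (hd2 : d ≤ m) :
    2 * ((if a = b then (1:ℤ) else 0) * (if c = d then 1 else 0)
      - (({a + b, c + d, a - b, c - d} : Finset ℤ).image
          (fun x => abs (2 * m + 1 - 2 * abs x))).card) = X (2 * m) a b c d := by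
  have hne1 : abs (2 * m + 1 - 2 * abs (a + b)) ≠ abs (2 * m + 1 - 2 * abs (a - b)) := gne m a b hm ha ha2 hb hb2
  have hne2 : abs (2 * m + 1 - 2 * abs (c + d)) ≠ abs (2 * m + 1 - 2 * abs (c - d)) := gne m c d hm hc hc2 hd hd2
  have himg : (({a + b, c + d, a - b, c - d} : Finset ℤ).image
      (fun x => abs (2 * m + 1 - 2 * abs x))) = {abs (2 * m + 1 - 2 * abs (a + b)), abs (2 * m + 1 - 2 * abs (c + d)), abs (2 * m + 1 - 2 * abs (a - b)), abs (2 * m + 1 - 2 * abs (c - d))} := by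
    simp only [Finset.image_insert, Finset.image_singleton]
  rw [himg, card4 hne1 hne2]
  have e1 := E1 m a b c d hm ha ha2 hb hb2 hc hc2 hd hd2
  have e2 := E2 m a b c d hm ha ha2 hb hb2 hc hc2 hd hd2
  have e3 := E3 m a b c d hm ha ha2 hb hb2 hc hc2 hd hd2
  have e4 := E4 m a b c d hm ha ha2 hb hb2 hc hc2 hd hd2
  have z1 : (if a + b + c + d = 0 then (1:ℤ) else 0) = 0 := by rw [if_neg]; omega
  have z2 : (if -a - b - c - d = 0 then (1:ℤ) else 0) = 0 := by rw [if_neg]; omega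
  have z3 : (if a + b - c - d = 2 * m + 1 then (1:ℤ) else 0) = 0 := by rw [if_neg]; omega
  have z4 : (if a - b + c - d = 2 * m + 1 then (1:ℤ) else 0) = 0 := by rw [if_neg]; omega
  have z5 : (if a - b - c + d = 2 * m + 1 then (1:ℤ) else 0) = 0 := by rw [if_neg]; omega
  have z6 : (if a - b - c - d = 2 * m + 1 then (1:ℤ) else 0) = 0 := by rw [if_neg]; omega
  have z7 : (if -a + b + c - d = 2 * m + 1 then (1:ℤ) else 0) = 0 := by rw [if_neg]; omega
  have z8 : (if -a + b - c + d = 2 * m + 1 then (1:ℤ) else 0) = 0 := by rw [if_neg]; omega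
  have z9 : (if -a + b - c - d = 2 * m + 1 then (1:ℤ) else 0) = 0 := by rw [if_neg]; omega
  have z10 : (if -a - b + c + d = 2 * m + 1 then (1:ℤ) else 0) = 0 := by rw [if_neg]; omega
  have z11 : (if -a - b + c - d = 2 * m + 1 then (1:ℤ) else 0) = 0 := by rw [if_neg]; omega
  have z12 : (if -a - b - c + d = 2 * m + 1 then (1:ℤ) else 0) = 0 := by rw [if_neg]; omega
  have z13 : (if -a - b - c - d = 2 * m + 1 then (1:ℤ) else 0) = 0 := by rw [if_neg]; omega
  unfold X
  linarith [e1, e2, e3, e4, z1, z2, z3, z4, z5, z6, z7, z8, z9, z10, z11, z12, z13]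

lemma Xswap (q : ℤ) (x y : Fin 4) (d : Fin 4 → ℤ) :
    X q (d (Equiv.swap x y 0)) (d (Equiv.swap x y 1)) (d (Equiv.swap x y 2))
      (d (Equiv.swap x y 3)) = X q (d 0) (d 1) (d 2) (d 3) := by
  fin_cases x <;> fin_cases y <;>
    simp only [Equiv.swap_apply_def] <;> norm_num <;>
    first
      | rfl
      | exact Xab q _ _ _ _
      | exact Xac q _ _ _ _
      | exact Xad q _ _ _ _
      | exact Xbc q _ _ _ _
      | exact Xbd q _ _ _ _
      | exact Xcd q _ _ _ _

lemma Xperm (q : ℤ) (σ : Equiv.Perm (Fin 4)) :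
    ∀ d : Fin 4 → ℤ, X q (d (σ 0)) (d (σ 1)) (d (σ 2)) (d (σ 3)) =
      X q (d 0) (d 1) (d 2) (d 3) := by
  refine Equiv.Perm.swap_induction_on σ (fun d => rfl) ?_
  intro f x y hxy ih d
  simp only [Equiv.Perm.mul_apply]
  exact (ih (fun i => d (Equiv.swap x y i))).trans (Xswap q x y d)

theorem stmt_19 (q : ℕ) (hq : 2 ≤ q) (hqe : Even q) (c : Fin 4 → ℤ)
    (hc : ∀ i, 1 ≤ c i ∧ c i ≤ (q : ℤ) / 2) (σ : Equiv.Perm (Fin 4)) :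
    (fun d : Fin 4 → ℤ =>
      (if d 0 = d 1 then (1 : ℤ) else 0) * (if d 2 = d 3 then 1 else 0)
        - (({d 0 + d 1, d 2 + d 3, d 0 - d 1, d 2 - d 3} : Finset ℤ).image
            (fun x => abs ((q : ℤ) + 1 - 2 * abs x))).card) (c ∘ σ) =
    (fun d : Fin 4 → ℤ =>
      (if d 0 = d 1 then (1 : ℤ) else 0) * (if d 2 = d 3 then 1 else 0)
        - (({d 0 + d 1, d 2 + d 3, d 0 - d 1, d 2 - d 3} : Finset ℤ).image
            (fun x => abs ((q : ℤ) + 1 - 2 * abs x))).card) c := by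
  obtain ⟨n, hn⟩ := hqe
  have hq2 : (q : ℤ) = 2 * (n : ℤ) := by rw [hn]; push_cast; ring
  have hm : (1 : ℤ) ≤ (n : ℤ) := by
    have h1 : 1 ≤ n := by omega
    exact_mod_cast h1
  have hbd : ∀ i, 1 ≤ c i ∧ c i ≤ (n : ℤ) := by
    intro i
    obtain ⟨h1, h2⟩ := hc i
    rw [hq2] at h2
    exact ⟨h1, by omega⟩
  simp only [hq2, Function.comp_apply]
  have k1 := core (n : ℤ) (c (σ 0)) (c (σ 1)) (c (σ 2)) (c (σ 3)) hm
    (hbd _).1 (hbd _).2 (hbd _).1 (hbd _).2 (hbd _).1 (hbd _).2 (hbd _).1 (hbd _).2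
  have k2 := core (n : ℤ) (c 0) (c 1) (c 2) (c 3) hm
    (hbd _).1 (hbd _).2 (hbd _).1 (hbd _).2 (hbd _).1 (hbd _).2 (hbd _).1 (hbd _).2
  have k3 := Xperm (2 * (n : ℤ)) σ c
  omega
end
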